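/- (Integration by parts for nabla discrete ABR fractional sums) Let a, b ∈ ℤ with b - a ≥ 2, α ∈ (0,1/2), B(α) > 0, and f, g : {a,...,b} → ℝ. Then Σ_{s=a+1}^{b-1} g(s) · ^{AB}_a∇^{-α} f(s) = Σ_{s=a+1}^{b-1} f(s) · ^{AB}∇_b^{-α} g(s). -/

import Mathlib

/-- Generalized rising function `z^{\overline{β}} = Γ(z+β)/Γ(z)`. -/
noncomputable def rise (z β : ℝ) : ℝ := Real.Gamma (z + β) / Real.Gamma z

/-- Left AB fractional sum
`^{AB}_a∇^{-α} f(t) = ((1-α)/B) f(t) + (α/B)(1/Γ(α)) Σ_{s=a+1}^t (t-s+1)^{\overline{α-1}} f(s)`. -/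
noncomputable def ABsumLeft (B α : ℝ) (a : ℤ) (f : ℤ → ℝ) (t : ℤ) : ℝ :=
  ((1 - α) / B) * f t + (α / B) * (1 / Real.Gamma α) *
    ∑ s ∈ Finset.Icc (a + 1) t, rise ((t : ℝ) - (s : ℝ) + 1) (α - 1) * f s

/-- Right AB fractional sum
`^{AB}∇_b^{-α} g(t) = ((1-α)/B) g(t) + (α/B)(1/Γ(α)) Σ_{s=t}^{b-1} (s-t+1)^{\overline{α-1}} g(s)`. -/
noncomputable def ABsumRight (B α : ℝ) (b : ℤ) (g : ℤ → ℝ) (t : ℤ) : ℝ :=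
  ((1 - α) / B) * g t + (α / B) * (1 / Real.Gamma α) *
    ∑ s ∈ Finset.Icc t (b - 1), rise ((s : ℝ) - (t : ℝ) + 1) (α - 1) * g s

/-- Triangle swap for double sums. -/
lemma triangle_swap (a b : ℤ) (F : ℤ → ℤ → ℝ) :
    ∑ t ∈ Finset.Icc a b, ∑ s ∈ Finset.Icc a t, F t s
      = ∑ s ∈ Finset.Icc a b, ∑ t ∈ Finset.Icc s b, F t s := by
  rw [Finset.sum_sigma', Finset.sum_sigma']
  refine Finset.sum_nbij' (fun p => ⟨p.2, p.1⟩) (fun p => ⟨p.2, p.1⟩) ?_ ?_ ?_ ?_ ?_ <;>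
    intro p hp <;> simp only [Finset.mem_sigma, Finset.mem_Icc] at hp ⊢ <;>
    first | rfl | omega

/-- Integration by parts for nabla discrete ABR fractional sums. -/
theorem AB_sum_integration_by_parts (a b : ℤ) (hab : 2 ≤ b - a) (α B : ℝ)
    (hα0 : 0 < α) (hα2 : α < 1 / 2) (hB : 0 < B) (f g : ℤ → ℝ) :
    (∑ s ∈ Finset.Icc (a + 1) (b - 1), g s * ABsumLeft B α a f s)
      = ∑ s ∈ Finset.Icc (a + 1) (b - 1), f s * ABsumRight B α b g s := by
  simp only [ABsumLeft, ABsumRight, mul_add, Finset.sum_add_distrib, Finset.mul_sum]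
  congr 1
  · exact Finset.sum_congr rfl fun s _ => by ring
  · have := triangle_swap (a + 1) (b - 1)
      (fun t s => g t * (α / B * (1 / Real.Gamma α) * (rise ((t : ℝ) - (s : ℝ) + 1) (α - 1) * f s)))
    rw [this]
    exact Finset.sum_congr rfl fun s _ => Finset.sum_congr rfl fun t _ => by ring
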